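/- arXiv:2205.00802 — 2 statements merged into one kernel-verified Lean document; each statement's English description precedes it below -/
import Mathlib

section
/- For every x ∈ (0, π), the function t ↦ log( sin(x t / 2) )·t·√( log(1 + 1/(x t)) ) is decreasing in t on the interval (0, 1/(10x)): if 0 < t₁ ≤ t₂ < 1/(10x) then the value at t₂ is ≤ the value at t₁. -/
open Real Set

lemma stmt16_exp_two_le : Real.exp 2 ≤ 7.39 := by
  have h := Real.exp_one_lt_d9
  have h2 : Real.exp 2 = Real.exp 1 * Real.exp 1 := by
    rw [← Real.exp_add]; norm_num
  nlinarith [Real.exp_pos 1]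

set_option maxHeartbeats 1000000 in
lemma stmt16_aux (x : ℝ) (hx0 : 0 < x) (hxpi : x < Real.pi) :
    AntitoneOn (fun t => Real.log (Real.sin (x * t / 2)) * t *
      Real.sqrt (Real.log (1 + (x * t)⁻¹))) (Set.Ioo 0 (1 / (10 * x))) := by
  have hpi : (3:ℝ) < Real.pi := Real.pi_gt_three
  have key : ∀ t ∈ Set.Ioo (0:ℝ) (1 / (10 * x)), ∃ d : ℝ, d ≤ 0 ∧
      HasDerivAt (fun t => Real.log (Real.sin (x * t / 2)) * t *
        Real.sqrt (Real.log (1 + (x * t)⁻¹))) d t := by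
    rintro t ⟨ht0, htu⟩
    have hxt : 0 < x * t := mul_pos hx0 ht0
    have hxt10 : x * t < 1 / 10 := by
      have h1 : x * t < x * (1 / (10 * x)) := by
        exact mul_lt_mul_of_pos_left htu hx0
      have h2 : x * (1 / (10 * x)) = 1 / 10 := by
        field_simp
      linarith
    set v := x * t / 2 with hv
    have hv0 : 0 < v := by positivity
    have hv20 : v < 1 / 20 := by rw [hv]; linarith
    have hvlt : v < Real.pi / 2 := by linarith
    have hsn : 0 < Real.sin v := Real.sin_pos_of_pos_of_lt_pi hv0 (by linarith)
    have hsnlt : Real.sin v < v := Real.sin_lt hv0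
    have hcv : 0 < Real.cos v := Real.cos_pos_of_mem_Ioo ⟨by linarith, hvlt⟩
    have hl : Real.log (Real.sin v) ≤ -2 := by
      rw [Real.log_le_iff_le_exp hsn]
      have : Real.exp (-2) = (Real.exp 2)⁻¹ := Real.exp_neg 2
      have h5 : (20:ℝ)⁻¹ ≤ (Real.exp 2)⁻¹ := by
        apply inv_anti₀ (Real.exp_pos 2)
        linarith [stmt16_exp_two_le]
      rw [this]
      have : Real.sin v ≤ (20:ℝ)⁻¹ := by
        have : v ≤ (20:ℝ)⁻¹ := by rw [one_div] at hv20; linarith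
        linarith
      linarith
    -- inverse bound
    have hinv10 : (10:ℝ) < (x * t)⁻¹ := by
      have h1 : (x * t) * (x * t)⁻¹ = 1 := mul_inv_cancel₀ hxt.ne'
      nlinarith [inv_pos.2 hxt]
    have harg : (0:ℝ) < 1 + (x * t)⁻¹ := by linarith
    set M := Real.log (1 + (x * t)⁻¹) with hMdef
    have hM : 2 ≤ M := by
      rw [hMdef, Real.le_log_iff_exp_le harg]
      linarith [stmt16_exp_two_le]
    have hM0 : 0 < M := by linarith
    set r := Real.sqrt M with hrdef
    have hr0 : 0 < r := Real.sqrt_pos.2 hM0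
    have hrsq : r ^ 2 = M := Real.sq_sqrt hM0.le
    have hr1 : 1 ≤ r := by nlinarith
    -- derivatives
    have h1 : HasDerivAt (fun t => x * t / 2) (x / 2) t := by
      simpa using ((hasDerivAt_id t).const_mul x).div_const 2
    have h2 : HasDerivAt (fun t => Real.sin (x * t / 2)) (Real.cos (x * t / 2) * (x / 2)) t :=
      h1.sin
    have h3 : HasDerivAt (fun t => Real.log (Real.sin (x * t / 2)))
        (Real.cos (x * t / 2) * (x / 2) / Real.sin (x * t / 2)) t := h2.log hsn.ne'
    have h4 : HasDerivAt (fun t => Real.log (Real.sin (x * t / 2)) * t)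
        (Real.cos (x * t / 2) * (x / 2) / Real.sin (x * t / 2) * t
          + Real.log (Real.sin (x * t / 2)) * 1) t := h3.mul (hasDerivAt_id t)
    have h5 : HasDerivAt (fun t => x * t) x t := by
      simpa using (hasDerivAt_id t).const_mul x
    have h6 : HasDerivAt (fun t => (x * t)⁻¹) (-x / (x * t) ^ 2) t := h5.inv hxt.ne'
    have h7 : HasDerivAt (fun t => 1 + (x * t)⁻¹) (-x / (x * t) ^ 2) t := h6.const_add 1
    have h8 : HasDerivAt (fun t => Real.log (1 + (x * t)⁻¹))
        ((-x / (x * t) ^ 2) / (1 + (x * t)⁻¹)) t := h7.log harg.ne'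
    have h9 : HasDerivAt (fun t => Real.sqrt (Real.log (1 + (x * t)⁻¹)))
        (((-x / (x * t) ^ 2) / (1 + (x * t)⁻¹)) / (2 * Real.sqrt (Real.log (1 + (x * t)⁻¹)))) t :=
      h8.sqrt hM0.ne'
    have hD := h4.mul h9
    refine ⟨_, ?_, hD⟩
    -- now show the derivative is nonpositive
    set l := Real.log (Real.sin (x * t / 2)) with hldef
    have hlv : l = Real.log (Real.sin v) := by rw [hldef, hv]
    have hl2 : l ≤ -2 := by rw [hlv]; exact hl
    -- first factor bound
    have hfac : Real.cos (x * t / 2) * (x / 2) / Real.sin (x * t / 2) * t + l * 1 ≤ 1 + l := by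
      have hvcos : Real.cos v * v < Real.sin v := by
        have htan := Real.lt_tan hv0 hvlt
        rw [Real.tan_eq_sin_div_cos] at htan
        rw [lt_div_iff₀ hcv] at htan
        linarith [htan]
      have : Real.cos (x * t / 2) * (x / 2) / Real.sin (x * t / 2) * t
          = (Real.cos v * v) / Real.sin v := by
        rw [hv]; field_simp
      rw [this]
      have h1 : (Real.cos v * v) / Real.sin v ≤ 1 := by
        rw [div_le_one hsn]; linarith
      linarith
    have hstep1 : (Real.cos (x * t / 2) * (x / 2) / Real.sin (x * t / 2) * t + l * 1)
        * Real.sqrt (Real.log (1 + (x * t)⁻¹)) ≤ (1 + l) * r := by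
      have : Real.sqrt (Real.log (1 + (x * t)⁻¹)) = r := rfl
      rw [this]
      exact mul_le_mul_of_nonneg_right hfac hr0.le
    -- second term
    have hxt1 : (0:ℝ) < x * t + 1 := by linarith
    have hstep2 : l * t * (((-x / (x * t) ^ 2) / (1 + (x * t)⁻¹))
        / (2 * Real.sqrt (Real.log (1 + (x * t)⁻¹)))) = (-l) / ((x * t + 1) * (2 * r)) := by
      have : Real.sqrt (Real.log (1 + (x * t)⁻¹)) = r := rfl
      rw [this]
      field_simp
    have hstep3 : (-l) / ((x * t + 1) * (2 * r)) ≤ (-l) / 2 := by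
      apply div_le_div_of_nonneg_left (by linarith) (by norm_num) ?_
      nlinarith
    have hfinal : (1 + l) * r + (-l) / 2 ≤ 0 := by nlinarith
    calc (Real.cos (x * t / 2) * (x / 2) / Real.sin (x * t / 2) * t + l * 1)
          * Real.sqrt (Real.log (1 + (x * t)⁻¹))
        + l * t * (((-x / (x * t) ^ 2) / (1 + (x * t)⁻¹))
          / (2 * Real.sqrt (Real.log (1 + (x * t)⁻¹))))
        ≤ (1 + l) * r + (-l) / 2 := by
          rw [hstep2]; exact add_le_add hstep1 hstep3
      _ ≤ 0 := hfinal
  -- assemble antitonicity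
  apply antitoneOn_of_deriv_nonpos (convex_Ioo _ _)
  · intro t ht
    obtain ⟨d, _, hd⟩ := key t ht
    exact hd.continuousAt.continuousWithinAt
  · intro t ht
    rw [interior_Ioo] at ht
    obtain ⟨d, _, hd⟩ := key t ht
    exact hd.differentiableAt.differentiableWithinAt
  · intro t ht
    rw [interior_Ioo] at ht
    obtain ⟨d, hd0, hd⟩ := key t ht
    rw [hd.deriv]; exact hd0

/-- For every `x ∈ (0, π)`, the function `t ↦ log(sin(x t / 2)) · t · √(log(1 + 1/(x t)))`
is decreasing in `t` on the interval `(0, 1/(10x))`. -/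
theorem stmt_16 (x : ℝ) (hx : x ∈ Set.Ioo 0 Real.pi) (t₁ t₂ : ℝ)
    (ht₁ : 0 < t₁) (h : t₁ ≤ t₂) (ht₂ : t₂ < 1 / (10 * x)) :
    Real.log (Real.sin (x * t₂ / 2)) * t₂ * Real.sqrt (Real.log (1 + 1 / (x * t₂))) ≤
      Real.log (Real.sin (x * t₁ / 2)) * t₁ * Real.sqrt (Real.log (1 + 1 / (x * t₁))) := by
  have := stmt16_aux x hx.1 hx.2 ⟨ht₁, lt_of_le_of_lt h ht₂⟩ ⟨lt_of_lt_of_le ht₁ h, ht₂⟩ h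
  simpa [one_div] using this
end

section
/- For every y ∈ (0, 2π), one has cot(y/2)/(4·sin²(y/2)) < 2/y³; equivalently, the third derivative of f(y) = log( sin(y/2)/(y/2) ) is strictly negative on (0, 2π). -/
open Real Filter

/-- `sin t ≥ t - t³/6` for `t ≥ 0`. -/
lemma aux_sin_lb (t : ℝ) (ht : 0 ≤ t) : t - t ^ 3 / 6 ≤ Real.sin t := by
  have hmono : Monotone (fun s : ℝ => Real.sin s - (s - s ^ 3 / 6)) := by
    apply monotone_of_hasDerivAt_nonneg (f' := fun s => Real.cos s - (1 - s ^ 2 / 2))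
    · intro x
      have h1 : HasDerivAt (fun s : ℝ => s - s ^ 3 / 6) (1 - 3 * x ^ 2 / 6) x := by
        have := ((hasDerivAt_pow 3 x).div_const 6)
        have h2 := (hasDerivAt_id' x).sub this
        exact h2.congr_deriv (by norm_num)
      exact ((Real.hasDerivAt_sin x).sub h1).congr_deriv (by beta_reduce; ring)
    · intro x
      have := Real.one_sub_sq_div_two_le_cos (x := x)
      simp only [Pi.zero_apply]
      linarith
  have := hmono ht
  simp at this
  linarith

/-- `cos t ≤ 1 - t²/2 + t⁴/24` for `t ≥ 0`. -/
lemma aux_cos_ub (t : ℝ) (ht : 0 ≤ t) : Real.cos t ≤ 1 - t ^ 2 / 2 + t ^ 4 / 24 := by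
  have key : MonotoneOn (fun s : ℝ => (1 - s ^ 2 / 2 + s ^ 4 / 24) - Real.cos s)
      (Set.Ici 0) := by
    apply monotoneOn_of_hasDerivWithinAt_nonneg (f' := fun s => Real.sin s - (s - s ^ 3 / 6))
      (convex_Ici 0)
    · fun_prop
    · intro x _
      apply HasDerivAt.hasDerivWithinAt
      have h1 : HasDerivAt (fun s : ℝ => 1 - s ^ 2 / 2 + s ^ 4 / 24)
          (-(2 * x) / 2 + 4 * x ^ 3 / 24) x := by
        have h2 := ((hasDerivAt_pow 2 x).div_const 2)
        have h3 := ((hasDerivAt_pow 4 x).div_const 24)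
        have := ((hasDerivAt_const x (1 : ℝ)).sub h2).add h3
        exact this.congr_deriv (by norm_num; ring)
      exact (h1.sub (Real.hasDerivAt_cos x)).congr_deriv (by beta_reduce; ring)
    · intro x hx
      rw [interior_Ici] at hx
      have := aux_sin_lb x hx.le
      linarith
  have h0 : (0 : ℝ) ∈ Set.Ici (0 : ℝ) := Set.self_mem_Ici
  have := key h0 ht ht
  simp at this
  linarith

/-- Key inequality: `t³ cos t < sin³ t` for `t ∈ (0, π)`. -/
lemma aux_key (t : ℝ) (ht0 : 0 < t) (htpi : t < Real.pi) :
    t ^ 3 * Real.cos t < Real.sin t ^ 3 := by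
  have hs : 0 < Real.sin t := Real.sin_pos_of_pos_of_lt_pi ht0 htpi
  rcases le_or_gt (Real.cos t) 0 with hc | hc
  · nlinarith [pow_pos hs 3, pow_pos ht0 3]
  · -- cos t > 0, so t < π/2 < 1.58
    have ht2 : t < Real.pi / 2 := by
      by_contra h
      push_neg at h
      have : Real.cos t ≤ 0 := Real.cos_nonpos_of_pi_div_two_le_of_le h (by linarith [Real.pi_pos])
      linarith
    have ht158 : t < 1.58 := lt_of_lt_of_le ht2 (by nlinarith [Real.pi_lt_d2])
    have hlb := aux_sin_lb t ht0.le
    have hub := aux_cos_ub t ht0.le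
    have hpos : 0 < t - t ^ 3 / 6 := by nlinarith
    have hcube : (t - t ^ 3 / 6) ^ 3 ≤ Real.sin t ^ 3 :=
      pow_le_pow_left₀ hpos.le hlb 3
    have h9 : t ^ 2 < 9 := by nlinarith
    have hprod : 0 < t ^ 3 * t ^ 4 * (9 - t ^ 2) :=
      mul_pos (mul_pos (pow_pos ht0 3) (pow_pos ht0 4)) (by linarith)
    have hstep : t ^ 3 * (1 - t ^ 2 / 2 + t ^ 4 / 24) < (t - t ^ 3 / 6) ^ 3 := by
      nlinarith [hprod]
    have hmul : t ^ 3 * Real.cos t ≤ t ^ 3 * (1 - t ^ 2 / 2 + t ^ 4 / 24) :=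
      mul_le_mul_of_nonneg_left hub (pow_pos ht0 3).le
    linarith

/-- For every `y ∈ (0, 2π)`, one has `cot(y/2)/(4·sin²(y/2)) < 2/y³`; equivalently, the
third derivative of `f(y) = log(sin(y/2)/(y/2))` is strictly negative on `(0, 2π)`. -/
theorem stmt_19 (y : ℝ) (hy : y ∈ Set.Ioo 0 (2 * Real.pi)) :
    Real.cos (y / 2) / Real.sin (y / 2) / (4 * Real.sin (y / 2) ^ 2) < 2 / y ^ 3 ∧
    iteratedDeriv 3 (fun z : ℝ => Real.log (Real.sin (z / 2) / (z / 2))) y < 0 := by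
  -- basic facts valid for any z in U := Ioo 0 (2π)
  set U : Set ℝ := Set.Ioo 0 (2 * Real.pi) with hUdef
  have hU : IsOpen U := isOpen_Ioo
  have hfacts : ∀ z ∈ U, 0 < z ∧ 0 < Real.sin (z / 2) := by
    intro z hz
    refine ⟨hz.1, Real.sin_pos_of_pos_of_lt_pi (by linarith [hz.1]) (by linarith [hz.2])⟩
  -- Part 1
  have part1 : ∀ z ∈ U,
      Real.cos (z / 2) / Real.sin (z / 2) / (4 * Real.sin (z / 2) ^ 2) < 2 / z ^ 3 := by
    intro z hz
    obtain ⟨hz0, hs⟩ := hfacts z hz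
    have hkey := aux_key (z / 2) (by linarith) (by linarith [hz.2])
    rw [div_div, div_lt_div_iff₀ (by positivity) (by positivity)]
    nlinarith [hkey]
  -- derivative chain
  set g1 : ℝ → ℝ := fun z => Real.cos (z / 2) / Real.sin (z / 2) / 2 - z⁻¹ with hg1def
  set g2 : ℝ → ℝ := fun z => (z ^ 2)⁻¹ - (4 * Real.sin (z / 2) ^ 2)⁻¹ with hg2def
  set g3 : ℝ → ℝ := fun z =>
    Real.cos (z / 2) / Real.sin (z / 2) / (4 * Real.sin (z / 2) ^ 2) - 2 / z ^ 3 with hg3def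
  have hd1 : ∀ z ∈ U,
      HasDerivAt (fun w : ℝ => Real.log (Real.sin (w / 2) / (w / 2))) (g1 z) z := by
    intro z hz
    obtain ⟨hz0, hs⟩ := hfacts z hz
    have hhalf : HasDerivAt (fun w : ℝ => w / 2) (1 / 2) z := (hasDerivAt_id z).div_const 2
    have hsin : HasDerivAt (fun w : ℝ => Real.sin (w / 2)) (Real.cos (z / 2) * (1 / 2)) z :=
      by have := (Real.hasDerivAt_sin (z / 2)).comp z hhalf; exact this
    have hlog1 := hsin.log hs.ne'
    have hlog2 := hhalf.log (by positivity : (z : ℝ) / 2 ≠ 0)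
    have hsub := hlog1.sub hlog2
    have heq : (fun w : ℝ => Real.log (Real.sin (w / 2) / (w / 2))) =ᶠ[nhds z]
        fun w => Real.log (Real.sin (w / 2)) - Real.log (w / 2) := by
      filter_upwards [hU.mem_nhds hz] with w hw
      obtain ⟨hw0, hws⟩ := hfacts w hw
      rw [Real.log_div hws.ne' (by positivity)]
    refine (hsub.congr_of_eventuallyEq heq).congr_deriv ?_
    rw [hg1def]
    field_simp [hs.ne', hz0.ne']
  have hd2 : ∀ z ∈ U, HasDerivAt g1 (g2 z) z := by
    intro z hz
    obtain ⟨hz0, hs⟩ := hfacts z hz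
    have hhalf : HasDerivAt (fun w : ℝ => w / 2) (1 / 2) z := (hasDerivAt_id z).div_const 2
    have hsin : HasDerivAt (fun w : ℝ => Real.sin (w / 2)) (Real.cos (z / 2) * (1 / 2)) z :=
      by have := (Real.hasDerivAt_sin (z / 2)).comp z hhalf; exact this
    have hcos : HasDerivAt (fun w : ℝ => Real.cos (w / 2)) (-Real.sin (z / 2) * (1 / 2)) z :=
      by have := (Real.hasDerivAt_cos (z / 2)).comp z hhalf; exact this
    have hdiv := (hcos.div hsin hs.ne').div_const 2
    have hinv := hasDerivAt_inv hz0.ne'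
    have hsub := hdiv.sub hinv
    refine hsub.congr_deriv ?_
    have hpyth := Real.sin_sq_add_cos_sq (z / 2)
    have hnum : -Real.sin (z / 2) * (1 / 2) * Real.sin (z / 2) -
        Real.cos (z / 2) * (Real.cos (z / 2) * (1 / 2)) = -(1 / 2) := by
      linear_combination (-(1 : ℝ) / 2) * hpyth
    rw [hg2def, hnum]
    field_simp [hs.ne', hz0.ne']
    ring
  have hd3 : ∀ z ∈ U, HasDerivAt g2 (g3 z) z := by
    intro z hz
    obtain ⟨hz0, hs⟩ := hfacts z hz
    have hhalf : HasDerivAt (fun w : ℝ => w / 2) (1 / 2) z := (hasDerivAt_id z).div_const 2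
    have hsin : HasDerivAt (fun w : ℝ => Real.sin (w / 2)) (Real.cos (z / 2) * (1 / 2)) z :=
      by have := (Real.hasDerivAt_sin (z / 2)).comp z hhalf; exact this
    have hsq : HasDerivAt (fun w : ℝ => w ^ 2) (2 * z ^ 1) z := by
      simpa using hasDerivAt_pow 2 z
    have hinv1 := hsq.inv (by positivity : z ^ 2 ≠ 0)
    have hsin2 := (hsin.pow 2).const_mul (4 : ℝ)
    have hinv2 := hsin2.inv (by positivity : 4 * Real.sin (z / 2) ^ 2 ≠ 0)
    have hsub := hinv1.sub hinv2
    refine hsub.congr_deriv ?_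
    rw [hg3def]
    simp only [Pi.pow_apply]
    field_simp [hs.ne', hz0.ne']
    ring
  -- part 2 via eventual equalities of iterated derivatives
  have hUy : U ∈ nhds y := hU.mem_nhds hy
  have e1 : deriv (fun z : ℝ => Real.log (Real.sin (z / 2) / (z / 2))) =ᶠ[nhds y] g1 := by
    filter_upwards [hUy] with z hz
    exact (hd1 z hz).deriv
  have e2 : deriv (deriv (fun z : ℝ => Real.log (Real.sin (z / 2) / (z / 2)))) =ᶠ[nhds y] g2 := by
    filter_upwards [hUy] with z hz
    have e1' : deriv (fun z : ℝ => Real.log (Real.sin (z / 2) / (z / 2))) =ᶠ[nhds z] g1 := by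
      filter_upwards [hU.mem_nhds hz] with w hw
      exact (hd1 w hw).deriv
    rw [e1'.deriv_eq]
    exact (hd2 z hz).deriv
  have e3 : deriv (deriv (deriv (fun z : ℝ => Real.log (Real.sin (z / 2) / (z / 2))))) y
      = g3 y := by
    rw [e2.deriv_eq]
    exact (hd3 y hy).deriv
  refine ⟨part1 y hy, ?_⟩
  have h3 : iteratedDeriv 3 (fun z : ℝ => Real.log (Real.sin (z / 2) / (z / 2)))
      = deriv (deriv (deriv (fun z : ℝ => Real.log (Real.sin (z / 2) / (z / 2))))) := by
    simp [iteratedDeriv_succ, iteratedDeriv_zero]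
  rw [h3, e3, hg3def]
  have := part1 y hy
  simp only
  linarith
end
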